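/- A local ring R is right almost perfect if and only if every nonzero non-faithful left R-module contains a simple submodule. -/

import Mathlib

universe u

/-- A ring is *right perfect* if it satisfies the descending chain condition
on principal left ideals. -/
def IsRightPerfectRing (R : Type u) [Ring R] : Prop :=
  ∀ f : ℕ → R, (∀ n, Ideal.span {f (n + 1)} ≤ Ideal.span {f n}) →
    ∃ N, ∀ n, N ≤ n → Ideal.span {f n} = Ideal.span {f N}

/-- A ring is *right almost perfect* if `R/I` is right perfect for every
two-sided ideal `I` with `0 ≠ I ≠ R`. -/
def IsRightAlmostPerfectRing (R : Type u) [Ring R] : Prop :=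
  ∀ I : TwoSidedIdeal R, I ≠ ⊥ → I ≠ ⊤ → IsRightPerfectRing I.ringCon.Quotient

section Aux
variable {R : Type u} [Ring R]

theorem auxIsUnitOfLeftInv (hR : IsLocalRing R) {a b : R} (h : b * a = 1) : IsUnit a := by
  haveI := hR.toNontrivial
  rcases hR.isUnit_or_isUnit_of_add_one (a := a * b) (b := 1 - a * b) (by abel) with hu | hu
  · obtain ⟨u, hu⟩ := hu
    have h1 : a * b * (↑u⁻¹ : R) = 1 := by rw [← hu, Units.mul_inv]
    have hb : b * (↑u⁻¹ : R) = b := by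
      calc b * (↑u⁻¹ : R) = (b * a) * (b * ↑u⁻¹) := by rw [h, one_mul]
        _ = b * (a * b * ↑u⁻¹) := by simp [mul_assoc]
        _ = b := by rw [h1, mul_one]
    refine ⟨⟨a, b * ↑u⁻¹, ?_, ?_⟩, rfl⟩
    · rw [← mul_assoc, h1]
    · rw [hb]; exact h
  · exfalso
    obtain ⟨w, hw⟩ := hu
    have h2 : (↑w : R) * a = 0 := by
      rw [hw, sub_mul, one_mul, mul_assoc, h, mul_one, sub_self]
    have ha : a = 0 := by
      calc a = ↑w⁻¹ * ((↑w : R) * a) := by rw [← mul_assoc, Units.inv_mul, one_mul]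
        _ = 0 := by rw [h2, mul_zero]
    exact one_ne_zero (by rw [← h, ha, mul_zero] : (1 : R) = 0)

theorem auxIsUnitOfRightInv (hR : IsLocalRing R) {a b : R} (h : a * b = 1) : IsUnit a := by
  haveI := hR.toNontrivial
  rcases hR.isUnit_or_isUnit_of_add_one (a := b * a) (b := 1 - b * a) (by abel) with hu | hu
  · obtain ⟨u, hu⟩ := hu
    have hc : ((↑u⁻¹ : R) * b) * a = 1 := by rw [mul_assoc, ← hu, Units.inv_mul]
    have hbc : (↑u⁻¹ : R) * b = b := by
      calc (↑u⁻¹ : R) * b = ((↑u⁻¹ : R) * b) * (a * b) := by rw [h, mul_one]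
        _ = (((↑u⁻¹ : R) * b) * a) * b := (mul_assoc _ a b).symm
        _ = b := by rw [hc, one_mul]
    exact ⟨⟨a, b, h, by rw [← hbc]; exact hc⟩, rfl⟩
  · exfalso
    obtain ⟨w, hw⟩ := hu
    have h2 : a * (↑w : R) = 0 := by
      rw [hw, mul_sub, mul_one, ← mul_assoc, h, one_mul, sub_self]
    have ha : a = 0 := by
      calc a = a * (↑w : R) * ↑w⁻¹ := by rw [mul_assoc, Units.mul_inv, mul_one]
        _ = 0 := by rw [h2, zero_mul]
    exact one_ne_zero (by rw [← h, ha, zero_mul] : (1 : R) = 0)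

theorem auxMulNonunitLeft (hR : IsLocalRing R) {a : R} (ha : a ∈ nonunits R) (r : R) :
    r * a ∈ nonunits R := by
  intro hu
  obtain ⟨u, hu⟩ := hu
  have h1 : ((↑u⁻¹ : R) * r) * a = 1 := by rw [mul_assoc, ← hu, Units.inv_mul]
  exact ha (auxIsUnitOfLeftInv hR h1)

theorem auxMulNonunitRight (hR : IsLocalRing R) {a : R} (ha : a ∈ nonunits R) (r : R) :
    a * r ∈ nonunits R := by
  intro hu
  obtain ⟨u, hu⟩ := hu
  have h1 : a * (r * (↑u⁻¹ : R)) = 1 := by rw [← mul_assoc, ← hu, Units.mul_inv]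
  exact ha (auxIsUnitOfRightInv hR h1)

theorem auxNonunitsAdd (hR : IsLocalRing R) {a b : R} (ha : a ∈ nonunits R)
    (hb : b ∈ nonunits R) : a + b ∈ nonunits R := by
  intro hu
  obtain ⟨u, hu⟩ := hu
  have h1 : (↑u⁻¹ : R) * a + (↑u⁻¹ : R) * b = 1 := by rw [← mul_add, ← hu, Units.inv_mul]
  rcases hR.isUnit_or_isUnit_of_add_one h1 with h2 | h2
  · have h3 : (↑u : R) * ((↑u⁻¹ : R) * a) = a := by rw [← mul_assoc, Units.mul_inv, one_mul]
    exact ha (h3 ▸ u.isUnit.mul h2)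
  · have h3 : (↑u : R) * ((↑u⁻¹ : R) * b) = b := by rw [← mul_assoc, Units.mul_inv, one_mul]
    exact hb (h3 ▸ u.isUnit.mul h2)

theorem auxIsUnitOneSub (hR : IsLocalRing R) {a : R} (ha : a ∈ nonunits R) : IsUnit (1 - a) := by
  rcases hR.isUnit_or_isUnit_of_add_one (a := a) (b := 1 - a) (by abel) with h | h
  · exact absurd h ha
  · exact h

theorem auxZeroNonunit (hR : IsLocalRing R) : (0 : R) ∈ nonunits R := by
  haveI := hR.toNontrivial
  simp [mem_nonunits_iff]

end Aux
section Aux2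
variable {R : Type u} [Ring R]

theorem auxSimpleOfSocle (hR : IsLocalRing R) {M : Type*} [AddCommGroup M] [Module R M]
    {x : M} (hx : x ≠ 0) (hs : ∀ u ∈ nonunits R, u • x = 0) :
    ∃ S : Submodule R M, IsSimpleModule R S := by
  refine ⟨Submodule.span R {x}, ?_⟩
  haveI : Nontrivial ↥(Submodule.span R {x}) := Submodule.nontrivial_span_singleton hx
  haveI : Nontrivial (Submodule R ↥(Submodule.span R {x})) := ⟨⊥, ⊤, bot_ne_top⟩
  refine (isSimpleModule_iff _ _).mpr ?_; constructor
  intro N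
  rcases eq_or_ne N ⊥ with hN | hN
  · exact Or.inl hN
  · refine Or.inr ?_
    obtain ⟨y, hyN, hy0⟩ := Submodule.exists_mem_ne_zero_of_ne_bot hN
    obtain ⟨r, hr⟩ := Submodule.mem_span_singleton.mp y.2
    have hru : IsUnit r := by
      by_contra hnr
      exact hy0 (Subtype.ext (by simp [← hr, hs r hnr]))
    obtain ⟨u, rfl⟩ := hru
    rw [eq_top_iff]
    intro z _
    obtain ⟨s, hs'⟩ := Submodule.mem_span_singleton.mp z.2
    have hxy : x = (↑u⁻¹ : R) • (y : M) := by
      rw [← hr, ← smul_assoc, smul_eq_mul, Units.inv_mul, one_smul]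
    have hz : (z : M) = (s * ↑u⁻¹) • (y : M) := by
      rw [← hs', mul_smul, ← hxy]
    have : z = (s * ↑u⁻¹) • y := Subtype.ext (by rw [hz]; rfl)
    rw [this]
    exact N.smul_mem _ hyN

theorem auxSocleOfSimple (hR : IsLocalRing R) {M : Type*} [AddCommGroup M] [Module R M]
    (T : Submodule R M) (hT : IsSimpleModule R T) :
    ∃ x : M, x ≠ 0 ∧ ∀ u ∈ nonunits R, u • x = 0 := by
  haveI := hT
  haveI : Nontrivial ↥T := IsSimpleModule.nontrivial R ↥T
  obtain ⟨x₀, hx₀⟩ := exists_ne (0 : ↥T)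
  set U : Submodule R ↥T :=
    { carrier := {z | ∃ u ∈ nonunits R, u • x₀ = z}
      zero_mem' := ⟨0, auxZeroNonunit hR, zero_smul R x₀⟩
      add_mem' := by
        rintro z w ⟨u, hu, rfl⟩ ⟨v, hv, rfl⟩
        exact ⟨u + v, auxNonunitsAdd hR hu hv, add_smul u v x₀⟩
      smul_mem' := by
        rintro r z ⟨u, hu, rfl⟩
        exact ⟨r * u, auxMulNonunitLeft hR hu r, mul_smul r u x₀⟩ } with hU
  rcases hT.eq_bot_or_eq_top (a := U) with h | h
  · refine ⟨(x₀ : M), by simpa using hx₀, fun u hu => ?_⟩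
    have : u • x₀ ∈ U := ⟨u, hu, rfl⟩
    rw [h] at this
    have h0 : u • x₀ = 0 := this
    calc u • (x₀ : M) = ((u • x₀ : ↥T) : M) := rfl
      _ = 0 := by rw [h0]; rfl
  · exfalso
    have hxU : x₀ ∈ U := h ▸ Submodule.mem_top
    obtain ⟨e, he, hex⟩ := hxU
    have h1 : (1 - e) • x₀ = 0 := by rw [sub_smul, one_smul, hex, sub_self]
    obtain ⟨w, hw⟩ := auxIsUnitOneSub hR he
    have : x₀ = 0 := by
      calc x₀ = ((↑w⁻¹ : R) * ↑w) • x₀ := by rw [Units.inv_mul, one_smul]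
        _ = (↑w⁻¹ : R) • ((↑w : R) • x₀) := mul_smul _ _ _
        _ = 0 := by rw [hw, h1, smul_zero]
    exact hx₀ this

end Aux2
section Prod
variable {R : Type u} [Ring R]

def segProd (a : ℕ → R) (i : ℕ) : ℕ → R
  | 0 => 1
  | k + 1 => a (i + k) * segProd a i k

theorem segProd_succ (a : ℕ → R) (i k : ℕ) :
    segProd a i (k + 1) = segProd a (i + 1) k * a i := by
  induction k with
  | zero => simp [segProd]
  | succ k ih =>
      show a (i + (k + 1)) * segProd a i (k + 1) = segProd a (i + 1) (k + 1) * a i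
      rw [ih]
      show a (i + (k + 1)) * (segProd a (i + 1) k * a i)
        = (a (i + 1 + k) * segProd a (i + 1) k) * a i
      have he : i + (k + 1) = i + 1 + k := by omega
      rw [he, mul_assoc]

end Prod

section ClaimA
variable {R : Type u} [Ring R]

theorem auxClaimA (hR : IsLocalRing R)
    (H : ∀ (M : Type u) (_ : AddCommGroup M) (_ : Module R M),
        (∃ r : R, r ≠ 0 ∧ ∀ m : M, r • m = 0) → Nontrivial M →
          ∃ S : Submodule R M, IsSimpleModule R S)
    {Q : Type u} [Ring Q] (π : R →+* Q) (hsurj : Function.Surjective π)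
    {r₀ : R} (hr₀ : r₀ ≠ 0) (hr₀I : π r₀ = 0)
    (a : ℕ → R) (ha : ∀ n, a n ∈ nonunits R) :
    ∃ n, π (segProd a 0 (n + 1)) = 0 := by
  by_contra hcon
  push_neg at hcon
  classical
  -- the big module
  letI : SMul R (ℕ → (Q →+ AddCircle (1 : ℚ))) :=
    ⟨fun r φ => fun i => (φ i).comp (AddMonoidHom.mulRight (π r))⟩
  have smul_def : ∀ (r : R) (φ : ℕ → (Q →+ AddCircle (1 : ℚ))) (i : ℕ) (s : Q),
      (r • φ) i s = φ i (s * π r) := fun r φ i s => rfl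
  letI : Module R (ℕ → (Q →+ AddCircle (1 : ℚ))) :=
    { one_smul := fun φ => by funext i; ext s; rw [smul_def]; simp
      mul_smul := fun r t φ => by
        funext i; ext s
        rw [smul_def, smul_def, smul_def, π.map_mul, mul_assoc]
      smul_zero := fun r => by funext i; ext s; rw [smul_def]; rfl
      smul_add := fun r φ ψ => by funext i; ext s; rw [smul_def]; rfl
      add_smul := fun r t φ => by
        funext i; ext s
        rw [smul_def, map_add, mul_add, map_add]; rfl
      zero_smul := fun φ => by
        funext i; ext s
        rw [smul_def, map_zero, mul_zero, map_zero]; rfl }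
  set Mod : Submodule R (ℕ → (Q →+ AddCircle (1 : ℚ))) :=
    { carrier := {φ | ∀ i s, φ i s = φ (i + 1) (π (a i) * s)}
      zero_mem' := fun i s => rfl
      add_mem' := by
        intro φ ψ hφ hψ i s
        show φ i s + ψ i s = φ (i + 1) _ + ψ (i + 1) _
        rw [hφ i s, hψ i s]
      smul_mem' := by
        intro r φ hφ i s
        rw [smul_def, smul_def, hφ i (s * π r), mul_assoc] } with hMod
  -- the角色 character group
  set gens : Set (ℕ →₀ Q) :=
    {x | ∃ i s, x = Finsupp.single i s - Finsupp.single (i + 1) (π (a i) * s)} with hgens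
  set K : AddSubgroup (ℕ →₀ Q) := AddSubgroup.closure gens with hK
  set coef : ℕ → ℕ → Q := fun n i => if i ≤ n + 1 then π (segProd a i (n + 1 - i)) else 0
    with hcoef
  set θ : ℕ → ((ℕ →₀ Q) →+ Q) :=
    fun n => Finsupp.liftAddHom (fun i => AddMonoidHom.mulLeft (coef n i)) with hθ
  have θ_single : ∀ n i s, θ n (Finsupp.single i s) = coef n i * s := by
    intro n i s
    rw [hθ]
    exact Finsupp.liftAddHom_apply_single _ _ _
  have key : ∀ i n, i ≤ n → coef n i = coef n (i + 1) * π (a i) := by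
    intro i n hin
    have h1 : i ≤ n + 1 := by omega
    have h2 : i + 1 ≤ n + 1 := by omega
    rw [hcoef]
    simp only [if_pos h1, if_pos h2]
    have h3 : n + 1 - i = (n - i) + 1 := by omega
    have h4 : n + 1 - (i + 1) = n - i := by omega
    rw [h3, h4, segProd_succ, map_mul]
  have hvan : ∀ x ∈ K, ∃ n₀ : ℕ, ∀ n, n₀ ≤ n → θ n x = 0 := by
    intro x hx
    refine AddSubgroup.closure_induction ?_ ?_ ?_ ?_ hx
    · rintro x ⟨i, s, rfl⟩
      refine ⟨i, fun n hn => ?_⟩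
      rw [map_sub, θ_single, θ_single, key i n hn, mul_assoc, sub_self]
    · exact ⟨0, fun n _ => map_zero _⟩
    · rintro x y _ _ ⟨n₁, h₁⟩ ⟨n₂, h₂⟩
      refine ⟨max n₁ n₂, fun n hn => ?_⟩
      rw [map_add, h₁ n (le_trans (le_max_left _ _) hn),
        h₂ n (le_trans (le_max_right _ _) hn), add_zero]
    · rintro x _ ⟨n₁, h₁⟩
      exact ⟨n₁, fun n hn => by rw [map_neg, h₁ n hn, neg_zero]⟩
  have hne : (Finsupp.single 0 (1 : Q)) ∉ K := by
    intro hmem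
    obtain ⟨n₀, hn₀⟩ := hvan _ hmem
    have h5 := hn₀ n₀ le_rfl
    rw [θ_single] at h5
    have hc : coef n₀ 0 = π (segProd a 0 (n₀ + 1)) := by rw [hcoef]; simp
    rw [hc, mul_one] at h5
    exact hcon n₀ h5
  have hq : ((Finsupp.single 0 (1 : Q) : ℕ →₀ Q) : (ℕ →₀ Q) ⧸ K) ≠ 0 := by
    intro h
    exact hne ((QuotientAddGroup.eq_zero_iff _).mp h)
  obtain ⟨ψ, hψ⟩ := CharacterModule.exists_character_apply_ne_zero_of_ne_zero hq
  set ψ' : ((ℕ →₀ Q) ⧸ K) →+ AddCircle (1 : ℚ) := ψ with hψ'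
  set Φ : ℕ → (Q →+ AddCircle (1 : ℚ)) :=
    fun i => ψ'.comp ((QuotientAddGroup.mk' K).comp (Finsupp.singleAddHom i)) with hΦdef
  have Φ_apply : ∀ i s, Φ i s = ψ' ((Finsupp.single i s : ℕ →₀ Q) : (ℕ →₀ Q) ⧸ K) := by
    intro i s; rfl
  have ΦMem : Φ ∈ Mod := by
    intro i s
    rw [Φ_apply, Φ_apply]
    congr 1
    rw [QuotientAddGroup.eq]
    rw [neg_add_eq_sub, ← neg_sub]
    exact K.neg_mem (AddSubgroup.subset_closure ⟨i, s, rfl⟩)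
  have hΦ0 : Φ ≠ 0 := by
    intro h0
    apply hψ
    have := congrFun h0 0
    have h1 : Φ 0 (1 : Q) = 0 := by rw [this]; rfl
    rw [Φ_apply] at h1
    exact h1
  obtain ⟨T, hT⟩ := H (↥Mod) inferInstance inferInstance
    ⟨r₀, hr₀, by
      intro m
      apply Subtype.ext
      show ((r₀ • m : ↥Mod) : ℕ → (Q →+ AddCircle (1 : ℚ))) = _
      rw [Submodule.coe_smul]
      funext i; ext s
      rw [smul_def, hr₀I, mul_zero, map_zero]
      rfl⟩
    ⟨⟨Φ, ΦMem⟩, 0, by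
      intro hc
      exact hΦ0 (congrArg Subtype.val hc)⟩
  obtain ⟨x, hx0, hxs⟩ := auxSocleOfSimple hR T hT
  apply hx0
  apply Subtype.ext
  have hx1 : ∀ i s, (x : ℕ → (Q →+ AddCircle (1 : ℚ))) i s
      = (x : ℕ → (Q →+ AddCircle (1 : ℚ))) (i + 1) (π (a i) * s) := x.2
  have hzero : ∀ (i : ℕ) (s : Q), (x : ℕ → (Q →+ AddCircle (1 : ℚ))) i s = 0 := by
    intro i s
    obtain ⟨t, rfl⟩ := hsurj s
    have hnon : a i * t ∈ nonunits R := auxMulNonunitRight hR (ha i) t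
    have h3 := hxs _ hnon
    have h5 : ((a i * t) • (x : ℕ → (Q →+ AddCircle (1 : ℚ)))) = 0 := by
      rw [← Submodule.coe_smul, h3]; rfl
    have h6 := DFunLike.congr_fun (congrFun h5 (i + 1)) (1 : Q)
    rw [smul_def, one_mul, map_mul] at h6
    rw [hx1 i (π t), h6]
    rfl
  funext i; ext s
  rw [hzero i s]
  rfl

end ClaimA
section Main
variable {R : Type u} [Ring R]

theorem auxPiZero (I : TwoSidedIdeal R) (x : R) : RingCon.mk' I.ringCon x = 0 ↔ x ∈ I := by
  have h1 : (RingCon.mk' I.ringCon x = RingCon.mk' I.ringCon 0) ↔ I.ringCon x 0 :=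
    RingCon.eq _
  rw [map_zero] at h1
  rw [h1, TwoSidedIdeal.mem_iff]

theorem auxPiSurj (I : TwoSidedIdeal R) : Function.Surjective (RingCon.mk' I.ringCon) :=
  fun q => Quotient.inductionOn' q fun x => ⟨x, rfl⟩

end Main

/-- A local ring is right almost perfect iff every nonzero non-faithful left
module contains a simple submodule. -/
theorem stmt8 {R : Type u} [Ring R] (hR : IsLocalRing R) :
    IsRightAlmostPerfectRing R ↔
      (∀ (M : Type u) (_ : AddCommGroup M) (_ : Module R M),
        (∃ r : R, r ≠ 0 ∧ ∀ m : M, r • m = 0) → Nontrivial M →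
          ∃ S : Submodule R M, IsSimpleModule R S) := by
  haveI := hR.toNontrivial
  constructor
  · -- almost perfect → socle condition
    intro hAP M instAG instMod hnf hnt
    obtain ⟨r, hr, hann⟩ := hnf
    by_contra hno
    push_neg at hno
    have hstep : ∀ x : M, x ≠ 0 → ∃ u, u ∈ nonunits R ∧ u • x ≠ 0 := by
      intro x hx
      by_contra hcon
      push_neg at hcon
      obtain ⟨S, hS⟩ := auxSimpleOfSocle hR hx hcon
      exact hno S hS
    set I : TwoSidedIdeal R := TwoSidedIdeal.mk' {c : R | ∀ m : M, c • m = 0}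
      (fun m => zero_smul R m)
      (fun {x y} hx hy m => by rw [add_smul, hx m, hy m, add_zero])
      (fun {x} hx m => by rw [neg_smul, hx m, neg_zero])
      (fun {x y} hy m => by rw [mul_smul, hy m, smul_zero])
      (fun {x y} hx m => by rw [mul_smul, hx (y • m)]) with hI
    have hmemI : ∀ c : R, c ∈ I ↔ ∀ m : M, c • m = 0 := by
      intro c; rw [hI, TwoSidedIdeal.mem_mk']; rfl
    have hrI : r ∈ I := (hmemI r).mpr hann
    have hIbot : I ≠ ⊥ := fun h => hr ((TwoSidedIdeal.mem_bot R).mp (h ▸ hrI))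
    have hItop : I ≠ ⊤ := by
      intro h
      obtain ⟨m₁, m₂, hm⟩ := hnt.exists_pair_ne
      have h1 : (1 : R) ∈ I := h ▸ TwoSidedIdeal.mem_top R
      have h2 := (hmemI 1).mp h1
      exact hm (by rw [← one_smul R m₁, h2 m₁, ← one_smul R m₂, h2 m₂])
    have hperf := hAP I hIbot hItop
    haveI : Nontrivial M := hnt
    obtain ⟨x₀, hx₀⟩ := exists_ne (0 : M)
    set seq : ℕ → {x : M // x ≠ 0} := fun n => Nat.rec ⟨x₀, hx₀⟩
      (fun _ p => ⟨(hstep p.1 p.2).choose • p.1, (hstep p.1 p.2).choose_spec.2⟩) n with hseqdef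
    set a : ℕ → R := fun n => (hstep (seq n).1 (seq n).2).choose with ha'
    have ha : ∀ n, a n ∈ nonunits R := fun n => (hstep (seq n).1 (seq n).2).choose_spec.1
    have hseq : ∀ n, (seq (n + 1)).1 = a n • (seq n).1 := fun n => rfl
    have hsegsucc : ∀ n, segProd a 0 (n + 1) = a n * segProd a 0 n := by
      intro n
      show a (0 + n) * segProd a 0 n = _
      rw [Nat.zero_add]
    have hval : ∀ n, (seq n).1 = segProd a 0 n • x₀ := by
      intro n
      induction n with
      | zero => show x₀ = (1 : R) • x₀; rw [one_smul]
      | succ n ih => rw [hseq n, ih, hsegsucc n, mul_smul]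
    set π : R →+* I.ringCon.Quotient := RingCon.mk' I.ringCon with hπ
    set f : ℕ → I.ringCon.Quotient := fun n => π (segProd a 0 n) with hf
    have hch : ∀ n, Ideal.span {f (n + 1)} ≤ Ideal.span {f n} := by
      intro n
      have h1 : f (n + 1) = π (a n) * f n := by
        rw [hf]; show π (segProd a 0 (n + 1)) = _
        rw [hsegsucc n, map_mul]
      refine Ideal.span_le.mpr (Set.singleton_subset_iff.mpr ?_)
      rw [h1]
      exact Ideal.mul_mem_left _ _ (Submodule.mem_span_singleton_self _)
    obtain ⟨N, hN⟩ := hperf f hch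
    have h1 : f N ∈ Ideal.span {f (N + 1)} := by
      rw [hN (N + 1) (Nat.le_succ N)]
      exact Submodule.mem_span_singleton_self _
    obtain ⟨c', hc'⟩ := Submodule.mem_span_singleton.mp h1
    obtain ⟨c, rfl⟩ := auxPiSurj I c'
    have h2 : π (c * segProd a 0 (N + 1)) = π (segProd a 0 N) := by
      rw [map_mul]
      exact hc'
    have h3 : c * segProd a 0 (N + 1) - segProd a 0 N ∈ I :=
      (TwoSidedIdeal.rel_iff I _ _).mp ((RingCon.eq _).mp h2)
    have h4 : (c * segProd a 0 (N + 1) - segProd a 0 N) • x₀ = 0 := (hmemI _).mp h3 x₀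
    have h5 : (c * a N) • (seq N).1 = (seq N).1 := by
      have h6 : (c * segProd a 0 (N + 1)) • x₀ = segProd a 0 N • x₀ :=
        sub_eq_zero.mp (by rw [← sub_smul]; exact h4)
      calc (c * a N) • (seq N).1 = (c * a N) • (segProd a 0 N • x₀) := by rw [hval N]
        _ = ((c * a N) * segProd a 0 N) • x₀ := (mul_smul _ _ _).symm
        _ = (c * (a N * segProd a 0 N)) • x₀ := by rw [mul_assoc]
        _ = (c * segProd a 0 (N + 1)) • x₀ := by rw [← hsegsucc N]
        _ = segProd a 0 N • x₀ := h6
        _ = (seq N).1 := (hval N).symm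
    have h6 : (1 - c * a N) • (seq N).1 = 0 := by
      rw [sub_smul, one_smul, h5, sub_self]
    obtain ⟨w, hw⟩ := auxIsUnitOneSub hR (auxMulNonunitLeft hR (ha N) c)
    refine (seq N).2 ?_
    calc (seq N).1 = ((↑w⁻¹ : R) * ↑w) • (seq N).1 := by rw [Units.inv_mul, one_smul]
      _ = (↑w⁻¹ : R) • ((↑w : R) • (seq N).1) := mul_smul _ _ _
      _ = 0 := by rw [hw, h6, smul_zero]
  · -- socle condition → almost perfect
    intro H I hIbot hItop f hf
    set π : R →+* I.ringCon.Quotient := RingCon.mk' I.ringCon with hπ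
    have hsurj : Function.Surjective π := auxPiSurj I
    obtain ⟨r₀, hr₀I, hr₀b⟩ : ∃ r₀, r₀ ∈ I ∧ r₀ ∉ (⊥ : TwoSidedIdeal R) := by
      have h1 : ¬ I ≤ ⊥ := fun h => hIbot (le_antisymm h bot_le)
      obtain ⟨r₀, h2, h3⟩ := SetLike.not_le_iff_exists.mp h1
      exact ⟨r₀, h2, h3⟩
    have hr₀ : r₀ ≠ 0 := fun h => hr₀b ((TwoSidedIdeal.mem_bot R).mpr h)
    have hπr₀ : π r₀ = 0 := (auxPiZero I r₀).mpr hr₀I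
    by_contra hcon
    push_neg at hcon
    have hmono : ∀ m n, m ≤ n → Ideal.span {f n} ≤ Ideal.span {f m} := by
      intro m n h
      induction h with
      | refl => exact le_rfl
      | step h ih => exact le_trans (hf _) ih
    set nseq : ℕ → ℕ := fun k => Nat.rec 0 (fun _ N => (hcon N).choose) k with hnseq
    have hn1 : ∀ k, nseq k ≤ nseq (k + 1) := fun k => (hcon (nseq k)).choose_spec.1
    have hn2 : ∀ k, Ideal.span {f (nseq (k + 1))} ≠ Ideal.span {f (nseq k)} :=
      fun k => (hcon _).choose_spec.2
    have hmem : ∀ k, f (nseq (k + 1)) ∈ Ideal.span {f (nseq k)} :=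
      fun k => hmono _ _ (hn1 k) (Submodule.mem_span_singleton_self _)
    choose d hd using fun k => Submodule.mem_span_singleton.mp (hmem k)
    choose e he using fun k => hsurj (d k)
    have hen : ∀ k, e k ∈ nonunits R := by
      intro k hu
      apply hn2 k
      have hdu : IsUnit (d k) := he k ▸ hu.map π
      obtain ⟨v, hv⟩ := hdu
      refine le_antisymm (hmono _ _ (hn1 k)) ?_
      have h1 : (↑v⁻¹ : I.ringCon.Quotient) • f (nseq (k + 1)) = f (nseq k) := by
        rw [← hd k, smul_eq_mul, smul_eq_mul, ← hv, ← mul_assoc, Units.inv_mul, one_mul]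
      refine Submodule.span_le.mpr (Set.singleton_subset_iff.mpr ?_)
      rw [← h1]
      exact Submodule.smul_mem _ _ (Submodule.mem_span_singleton_self _)
    obtain ⟨K, hK⟩ := auxClaimA hR H π hsurj hr₀ hπr₀ e hen
    have hsegsucc : ∀ k, segProd e 0 (k + 1) = e k * segProd e 0 k := by
      intro k
      show e (0 + k) * segProd e 0 k = _
      rw [Nat.zero_add]
    have hfval : ∀ k, f (nseq k) = π (segProd e 0 k) * f (nseq 0) := by
      intro k
      induction k with
      | zero =>
          show f (nseq 0) = π (1 : R) * f (nseq 0)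
          rw [map_one, one_mul]
      | succ k ih =>
          rw [← hd k, smul_eq_mul, ih, hsegsucc k, map_mul, ← he k, mul_assoc]
    have h0 : f (nseq (K + 1)) = 0 := by
      rw [hfval (K + 1), hK, zero_mul]
    obtain ⟨n, hn, hne⟩ := hcon (nseq (K + 1))
    apply hne
    have hbot : Ideal.span {f (nseq (K + 1))} = ⊥ := by rw [h0]; simp
    have h2 := hmono _ _ hn
    rw [hbot] at h2 ⊢
    exact le_bot_iff.mp h2
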